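/- A tuple (a_1,a_2,b_1,b_2,b_3) ∈ N^5 is a break divisor on K_{2,3} if and only if a_1+a_2+b_1+b_2+b_3 = 2 and a_1+a_2+b_k+b_l ≥ 1 for all 1 ≤ k < l ≤ 3. -/

import Mathlib

/-- The complete bipartite graph K_{2,3}, with parts {a₁,a₂} and {b₁,b₂,b₃}. -/
def K23 : SimpleGraph (Fin 2 ⊕ Fin 3) where
  Adj v w := v.isLeft ≠ w.isLeft
  symm := ⟨fun _ _ h => Ne.symm h⟩
  loopless := ⟨fun _ h => h rfl⟩

/-- The genus g(Γ') = |E(Γ')| - |V(Γ')| + 1 of a subgraph of K_{2,3}. -/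
noncomputable def subgraphGenus (H : K23.Subgraph) : ℤ :=
  (H.edgeSet.ncard : ℤ) - (H.verts.ncard : ℤ) + 1

/-- A break divisor on K_{2,3}: a function D : V → ℕ of total degree g(Γ) = |E|-|V|+1 whose
restriction to every connected subgraph Γ' has degree at least g(Γ'). -/
noncomputable def IsBreakDivisor (D : Fin 2 ⊕ Fin 3 → ℕ) : Prop :=
  (∑ v, (D v : ℤ)) =
      (K23.edgeSet.ncard : ℤ) - (Fintype.card (Fin 2 ⊕ Fin 3) : ℤ) + 1 ∧
    ∀ H : K23.Subgraph, H.Connected →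
      subgraphGenus H ≤ ∑ v ∈ (Set.toFinite H.verts).toFinset, (D v : ℤ)

instance : DecidableRel K23.Adj := fun v w => inferInstanceAs (Decidable (v.isLeft ≠ w.isLeft))

lemma K23_edge_ncard : K23.edgeSet.ncard = 6 := by
  rw [Set.ncard_eq_toFinset_card']; decide

lemma K23_adj_lr (i : Fin 2) (j : Fin 3) : K23.Adj (Sum.inl i) (Sum.inr j) := by
  simp [K23]

lemma ncard_prod' {α β : Type*} (s : Set α) (t : Set β) :
    (s ×ˢ t).ncard = s.ncard * t.ncard := by
  rw [← Nat.card_coe_set_eq, ← Nat.card_coe_set_eq, ← Nat.card_coe_set_eq,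
    Nat.card_congr (Equiv.Set.prod s t), Nat.card_prod]

/-- The 4-cycle subgraph on {a₁, a₂, b_k, b_l}. -/
def cyc (k l : Fin 3) : K23.Subgraph :=
  (⊤ : K23.Subgraph).induce {Sum.inl 0, Sum.inl 1, Sum.inr k, Sum.inr l}

lemma cyc_connected (k l : Fin 3) : (cyc k l).Connected := by
  have h0 : Sum.inl 0 ∈ (cyc k l).verts := by simp [cyc]
  have hk : Sum.inr k ∈ (cyc k l).verts := by simp [cyc]
  rw [SimpleGraph.Subgraph.connected_iff]
  refine ⟨⟨?_⟩, ⟨Sum.inl 0, h0⟩⟩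
  have hadj : ∀ (i : Fin 2) (j : Fin 3) (hv : Sum.inl i ∈ (cyc k l).verts)
      (hw : Sum.inr j ∈ (cyc k l).verts),
      (cyc k l).coe.Adj ⟨_, hv⟩ ⟨_, hw⟩ := by
    intro i j hv hw
    simp only [SimpleGraph.Subgraph.coe_adj]
    exact ⟨hv, hw, K23_adj_lr i j⟩
  have hub : ∀ (w : Fin 2 ⊕ Fin 3) (hw : w ∈ (cyc k l).verts),
      (cyc k l).coe.Reachable ⟨Sum.inl 0, h0⟩ ⟨w, hw⟩ := by
    intro w hw
    have hw' : w = Sum.inl 0 ∨ w = Sum.inl 1 ∨ w = Sum.inr k ∨ w = Sum.inr l := by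
      simpa [cyc] using hw
    rcases hw' with rfl | rfl | rfl | rfl
    · rfl
    · exact ((hadj 0 k h0 hk).reachable.trans (hadj 1 k hw hk).reachable.symm)
    · exact (hadj 0 k h0 hw).reachable
    · exact (hadj 0 l h0 hw).reachable
  rintro ⟨v, hv⟩ ⟨w, hw⟩
  exact (hub v hv).symm.trans (hub w hw)

/-- A tuple (a₁,a₂,b₁,b₂,b₃) ∈ ℕ⁵ is a break divisor on K_{2,3} if and only if
a₁+a₂+b₁+b₂+b₃ = 2 and a₁+a₂+b_k+b_l ≥ 1 for all 1 ≤ k < l ≤ 3. -/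
theorem break_divisor_iff_K23 (D : Fin 2 ⊕ Fin 3 → ℕ) :
    IsBreakDivisor D ↔
      ((∑ v, D v) = 2 ∧
        ∀ k l : Fin 3, k < l →
          1 ≤ D (Sum.inl 0) + D (Sum.inl 1) + D (Sum.inr k) + D (Sum.inr l)) := by
  have hcard : (Fintype.card (Fin 2 ⊕ Fin 3) : ℤ) = 5 := by norm_num
  constructor
  · rintro ⟨hsum, hsub⟩
    rw [K23_edge_ncard, hcard] at hsum
    have hsum2 : (∑ v, (D v : ℤ)) = 2 := by rw [hsum]; norm_num
    constructor
    · exact_mod_cast hsum2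
    · intro k l hkl
      have hc := hsub (cyc k l) (cyc_connected k l)
      have hkl' : k ≠ l := hkl.ne
      have hverts : (cyc k l).verts = {Sum.inl 0, Sum.inl 1, Sum.inr k, Sum.inr l} := rfl
      have hv4 : (cyc k l).verts.ncard = 4 := by
        rw [hverts,
          Set.ncard_insert_of_notMem (by simp),
          Set.ncard_insert_of_notMem (by simp),
          Set.ncard_insert_of_notMem (by simp [hkl']),
          Set.ncard_singleton]
      have hE : ({s(Sum.inl 0, Sum.inr k), s(Sum.inl 0, Sum.inr l),
          s(Sum.inl 1, Sum.inr k), s(Sum.inl 1, Sum.inr l)} :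
            Set (Sym2 (Fin 2 ⊕ Fin 3))) ⊆ (cyc k l).edgeSet := by
        intro e he
        simp only [Set.mem_insert_iff, Set.mem_singleton_iff] at he
        rcases he with rfl | rfl | rfl | rfl <;>
          · rw [SimpleGraph.Subgraph.mem_edgeSet]
            exact ⟨by simp [cyc], by simp [cyc], K23_adj_lr _ _⟩
      have hE4 : ({s(Sum.inl 0, Sum.inr k), s(Sum.inl 0, Sum.inr l),
          s(Sum.inl 1, Sum.inr k), s(Sum.inl 1, Sum.inr l)} :
            Set (Sym2 (Fin 2 ⊕ Fin 3))).ncard = 4 := by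
        rw [Set.ncard_insert_of_notMem (by simp [Sym2.eq_iff, hkl']),
          Set.ncard_insert_of_notMem (by simp [Sym2.eq_iff, hkl']),
          Set.ncard_insert_of_notMem (by simp [Sym2.eq_iff, hkl']),
          Set.ncard_singleton]
      have hle : 4 ≤ (cyc k l).edgeSet.ncard := by
        rw [← hE4]; exact Set.ncard_le_ncard hE (Set.toFinite _)
      have hgen : (1 : ℤ) ≤ subgraphGenus (cyc k l) := by
        unfold subgraphGenus
        rw [hv4]
        have : (4 : ℤ) ≤ ((cyc k l).edgeSet.ncard : ℤ) := by exact_mod_cast hle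
        omega
      have hfs : (Set.toFinite (cyc k l).verts).toFinset =
          ({Sum.inl 0, Sum.inl 1, Sum.inr k, Sum.inr l} : Finset (Fin 2 ⊕ Fin 3)) := by
        ext v; simp [cyc]
      rw [hfs] at hc
      have hsum4 : ∑ v ∈ ({Sum.inl 0, Sum.inl 1, Sum.inr k, Sum.inr l} :
          Finset (Fin 2 ⊕ Fin 3)), (D v : ℤ) =
          (D (Sum.inl 0) : ℤ) + D (Sum.inl 1) + D (Sum.inr k) + D (Sum.inr l) := by
        rw [Finset.sum_insert (by simp), Finset.sum_insert (by simp),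
          Finset.sum_insert (by simp [hkl']), Finset.sum_singleton]
        ring
      rw [hsum4] at hc
      have h14 := hgen.trans hc
      exact_mod_cast h14
  · rintro ⟨hsum, hineq⟩
    have hsumZ : (∑ v, (D v : ℤ)) = 2 := by exact_mod_cast hsum
    constructor
    · rw [K23_edge_ncard, hcard, hsumZ]; norm_num
    · intro H hH
      have hsub : H.edgeSet ⊆ (fun p : Fin 2 × Fin 3 => s(Sum.inl p.1, Sum.inr p.2)) ''
          ({i | Sum.inl i ∈ H.verts} ×ˢ {j | Sum.inr j ∈ H.verts}) := by
        intro e he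
        induction e using Sym2.ind with
        | _ x y =>
          rw [SimpleGraph.Subgraph.mem_edgeSet] at he
          have hx : x ∈ H.verts := H.edge_vert he
          have hy : y ∈ H.verts := H.edge_vert (H.adj_symm he)
          have hadj : K23.Adj x y := H.adj_sub he
          rcases x with i | j <;> rcases y with i' | j'
          · exact absurd rfl hadj
          · exact ⟨(i, j'), ⟨hx, hy⟩, rfl⟩
          · exact ⟨(i', j), ⟨hy, hx⟩, Sym2.eq_swap⟩
          · exact absurd rfl hadj
      have hEcard : H.edgeSet.ncard ≤
          ({i | Sum.inl i ∈ H.verts} : Set (Fin 2)).ncard *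
          ({j | Sum.inr j ∈ H.verts} : Set (Fin 3)).ncard := by
        calc H.edgeSet.ncard
            ≤ _ := Set.ncard_le_ncard hsub (Set.toFinite _)
          _ ≤ _ := Set.ncard_image_le (Set.toFinite _)
          _ = _ := ncard_prod' _ _
      have hScard : H.verts.ncard =
          ({i | Sum.inl i ∈ H.verts} : Set (Fin 2)).ncard +
          ({j | Sum.inr j ∈ H.verts} : Set (Fin 3)).ncard := by
        have hU : H.verts = Sum.inl '' {i | Sum.inl i ∈ H.verts} ∪
            Sum.inr '' {j | Sum.inr j ∈ H.verts} := by
          ext v; rcases v with i | j <;> simp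
        have h1 : (Sum.inl '' {i | Sum.inl i ∈ H.verts} ∪
            Sum.inr '' {j | Sum.inr j ∈ H.verts}).ncard =
            ({i | Sum.inl i ∈ H.verts} : Set (Fin 2)).ncard +
            ({j | Sum.inr j ∈ H.verts} : Set (Fin 3)).ncard := by
          rw [Set.ncard_union_eq (by
              rw [Set.disjoint_left]; rintro x ⟨i, _, rfl⟩ ⟨j, _, h⟩; exact Sum.inl_ne_inr h.symm)
            (Set.toFinite _) (Set.toFinite _),
            Set.ncard_image_of_injective _ Sum.inl_injective,
            Set.ncard_image_of_injective _ Sum.inr_injective]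
        rw [congrArg Set.ncard hU, h1]
      obtain ⟨a, ha⟩ : ∃ a, ({i | Sum.inl i ∈ H.verts} : Set (Fin 2)).ncard = a := ⟨_, rfl⟩
      obtain ⟨b, hb⟩ : ∃ b, ({j | Sum.inr j ∈ H.verts} : Set (Fin 3)).ncard = b := ⟨_, rfl⟩
      rw [ha, hb] at hEcard hScard
      have hLle : a ≤ 2 := by
        rw [← ha]
        have := Set.ncard_le_ncard (Set.subset_univ {i | Sum.inl i ∈ H.verts}) (Set.toFinite _)
        simpa [Set.ncard_univ] using this
      have hRle : b ≤ 3 := by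
        rw [← hb]
        have := Set.ncard_le_ncard (Set.subset_univ {j | Sum.inr j ∈ H.verts}) (Set.toFinite _)
        simpa [Set.ncard_univ] using this
      have hne : 1 ≤ a + b := by
        rw [← hScard]
        obtain ⟨v, hv⟩ := hH.nonempty
        exact (Set.ncard_pos (Set.toFinite _)).mpr ⟨v, hv⟩
      have hnonneg : (0 : ℤ) ≤ ∑ v ∈ (Set.toFinite H.verts).toFinset, (D v : ℤ) :=
        Finset.sum_nonneg fun v _ => Int.natCast_nonneg _
      have hgen : subgraphGenus H ≤ (a : ℤ) * b - (a + b) + 1 := by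
        unfold subgraphGenus
        rw [hScard]
        have : (H.edgeSet.ncard : ℤ) ≤ (a : ℤ) * b := by exact_mod_cast hEcard
        push_cast
        omega
      refine hgen.trans ?_
      -- remains: (a*b - (a+b) + 1 : ℤ) ≤ sum over verts
      interval_cases a <;> interval_cases b
      · omega
      · exact le_trans (by norm_num) hnonneg
      · exact le_trans (by norm_num) hnonneg
      · exact le_trans (by norm_num) hnonneg
      · exact le_trans (by norm_num) hnonneg
      · exact le_trans (by norm_num) hnonneg
      · exact le_trans (by norm_num) hnonneg
      · exact le_trans (by norm_num) hnonneg
      · exact le_trans (by norm_num) hnonneg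
      · exact le_trans (by norm_num) hnonneg
      -- a = 2, b = 2
      · have hLuniv : ({i | Sum.inl i ∈ H.verts} : Set (Fin 2)) = Set.univ :=
          Set.eq_of_subset_of_ncard_le (Set.subset_univ _)
            (by rw [ha, Set.ncard_univ]; norm_num) (Set.toFinite _)
        have hl0 : Sum.inl (0 : Fin 2) ∈ H.verts := by
          have := Set.eq_univ_iff_forall.mp hLuniv; exact this 0
        have hl1 : Sum.inl (1 : Fin 2) ∈ H.verts := by
          have := Set.eq_univ_iff_forall.mp hLuniv; exact this 1
        obtain ⟨k, l, hkl, hR⟩ := Set.ncard_eq_two.mp hb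
        have hrk : Sum.inr k ∈ H.verts := by
          have : k ∈ ({j | Sum.inr j ∈ H.verts} : Set (Fin 3)) := by rw [hR]; simp
          exact this
        have hrl : Sum.inr l ∈ H.verts := by
          have : l ∈ ({j | Sum.inr j ∈ H.verts} : Set (Fin 3)) := by rw [hR]; simp
          exact this
        have key : 1 ≤ D (Sum.inl 0) + D (Sum.inl 1) + D (Sum.inr k) + D (Sum.inr l) := by
          rcases hkl.lt_or_gt with h | h
          · exact hineq k l h
          · have := hineq l k h; omega
        have hsubF : ({Sum.inl 0, Sum.inl 1, Sum.inr k, Sum.inr l} :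
            Finset (Fin 2 ⊕ Fin 3)) ⊆ (Set.toFinite H.verts).toFinset := by
          intro v hv
          rw [Set.Finite.mem_toFinset]
          simp only [Finset.mem_insert, Finset.mem_singleton] at hv
          rcases hv with rfl | rfl | rfl | rfl
          exacts [hl0, hl1, hrk, hrl]
        have hsum4 : ∑ v ∈ ({Sum.inl 0, Sum.inl 1, Sum.inr k, Sum.inr l} :
            Finset (Fin 2 ⊕ Fin 3)), (D v : ℤ) =
            (D (Sum.inl 0) : ℤ) + D (Sum.inl 1) + D (Sum.inr k) + D (Sum.inr l) := by
          rw [Finset.sum_insert (by simp), Finset.sum_insert (by simp),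
            Finset.sum_insert (by simp [hkl]), Finset.sum_singleton]
          ring
        have hle4 : ∑ v ∈ ({Sum.inl 0, Sum.inl 1, Sum.inr k, Sum.inr l} :
            Finset (Fin 2 ⊕ Fin 3)), (D v : ℤ) ≤
            ∑ v ∈ (Set.toFinite H.verts).toFinset, (D v : ℤ) :=
          Finset.sum_le_sum_of_subset_of_nonneg hsubF
            (fun v _ _ => Int.natCast_nonneg _)
        have hkey' : (1 : ℤ) ≤ (D (Sum.inl 0) : ℤ) + D (Sum.inl 1) + D (Sum.inr k)
            + D (Sum.inr l) := by exact_mod_cast key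
        rw [hsum4] at hle4
        calc ((2 : ℕ) : ℤ) * ((2 : ℕ) : ℤ) - (((2:ℕ) : ℤ) + ((2:ℕ) : ℤ)) + 1
            = 1 := by norm_num
          _ ≤ _ := hkey'.trans hle4
      -- a = 2, b = 3
      · have hLuniv : ({i | Sum.inl i ∈ H.verts} : Set (Fin 2)) = Set.univ :=
          Set.eq_of_subset_of_ncard_le (Set.subset_univ _)
            (by rw [ha, Set.ncard_univ]; norm_num) (Set.toFinite _)
        have hRuniv : ({j | Sum.inr j ∈ H.verts} : Set (Fin 3)) = Set.univ :=
          Set.eq_of_subset_of_ncard_le (Set.subset_univ _)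
            (by rw [hb, Set.ncard_univ]; norm_num) (Set.toFinite _)
        have hV : (Set.toFinite H.verts).toFinset = Finset.univ := by
          ext v
          rw [Set.Finite.mem_toFinset]
          rcases v with i | j
          · exact ⟨fun _ => Finset.mem_univ _,
              fun _ => Set.eq_univ_iff_forall.mp hLuniv i⟩
          · exact ⟨fun _ => Finset.mem_univ _,
              fun _ => Set.eq_univ_iff_forall.mp hRuniv j⟩
        rw [hV, hsumZ]
        norm_num
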